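/- Let f be a Fibonacci map. Then for every n ≥ 2, the point d_n = f^{S_n}(c) lies in U^{n−1} but not in U^n; equivalently, |u_n| < |d_n| < |u_{n−1}|. -/
import Mathlib


noncomputable section

/-- The Fibonacci numbers `S 0 = 1`, `S 1 = 2`, `S (k+2) = S (k+1) + S k`. -/
def fibS : ℕ → ℕ
  | 0 => 1
  | 1 => 2
  | n + 2 => fibS (n + 1) + fibS n

/-- `f : [0,1] → [0,1]` is unimodal with critical point `c`: continuous, maps `[0,1]` into
itself, `f 0 = f 1 = 0`, `c ∈ (0,1)`, strictly increasing on `[0,c]`, strictly decreasing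
on `[c,1]`. -/
def IsUnimodal (f : ℝ → ℝ) (c : ℝ) : Prop :=
  ContinuousOn f (Set.Icc 0 1) ∧ Set.MapsTo f (Set.Icc 0 1) (Set.Icc 0 1) ∧
  f 0 = 0 ∧ f 1 = 0 ∧ c ∈ Set.Ioo (0 : ℝ) 1 ∧
  StrictMonoOn f (Set.Icc 0 c) ∧ StrictAntiOn f (Set.Icc c 1)

/-- `f` is symmetric about `c`: `f (2c - x) = f x` whenever both points lie in `[0,1]`
(the symmetric point of `x` is `x̂ = 2c - x`). -/
def SymmetricAbout (f : ℝ → ℝ) (c : ℝ) : Prop :=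
  ∀ x ∈ Set.Icc (0 : ℝ) 1, 2 * c - x ∈ Set.Icc (0 : ℝ) 1 → f (2 * c - x) = f x

/-- The distance from `c` to a nearest `k`-th preimage `c₋ₖ` of `c` in `[0,1]`,
i.e. `|c₋ₖ - c| = |c₋ₖ|`. -/
def preimDist (f : ℝ → ℝ) (c : ℝ) (k : ℕ) : ℝ :=
  sInf ((fun x => |x - c|) '' {x | x ∈ Set.Icc (0 : ℝ) 1 ∧ f^[k] x = c})

/-- `S` is the sequence of cutting times of `f`: `S 0 = 1`, and `S (i+1)` is the least
`k ≥ S i` for which the nearest `k`-th preimage `c₋ₖ` of `c` lies in the symmetric open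
interval `(c₋ₛᵢ, (c₋ₛᵢ)^)`, i.e. `c₋ₖ` exists and is strictly closer to `c` than `c₋ₛᵢ`. -/
def IsCuttingSeq (f : ℝ → ℝ) (c : ℝ) (S : ℕ → ℕ) : Prop :=
  S 0 = 1 ∧ ∀ i, IsLeast {k | S i ≤ k ∧
    ({x | x ∈ Set.Icc (0 : ℝ) 1 ∧ f^[k] x = c}).Nonempty ∧
    preimDist f c k < preimDist f c (S i)} (S (i + 1))

/-- A Fibonacci map: a symmetric unimodal map whose cutting times are exactly the
Fibonacci numbers `1, 2, 3, 5, 8, …`. -/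
def IsFibonacciMap (f : ℝ → ℝ) (c : ℝ) : Prop :=
  IsUnimodal f c ∧ SymmetricAbout f c ∧ IsCuttingSeq f c fibS

namespace FibAux

open Set Function

lemma fibS_add (n : ℕ) : fibS (n+2) = fibS (n+1) + fibS n := rfl

lemma fibS_add' (n : ℕ) : fibS n + fibS (n+1) = fibS (n+2) := by
  rw [fibS_add]; omega

lemma fibS_pos : ∀ n, 0 < fibS n
  | 0 => one_pos
  | 1 => two_pos
  | (n+2) => by rw [fibS_add]; exact Nat.add_pos_left (fibS_pos (n+1)) _

lemma fibS_lt : ∀ n, fibS n < fibS (n+1)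
  | 0 => by norm_num [fibS]
  | (n+1) => by rw [fibS_add]; exact Nat.lt_add_of_pos_right (fibS_pos n)

lemma fibS_one_le (n : ℕ) : 1 ≤ fibS n := fibS_pos n

lemma fibS_ge : ∀ n, n + 1 ≤ fibS n
  | 0 => le_rfl
  | (n+1) => by have := fibS_ge n; have := fibS_lt n; omega

/-- the set of `k`-th preimages of `c` in `[0,1]`. -/
def pset (f : ℝ → ℝ) (c : ℝ) (k : ℕ) : Set ℝ := {x | x ∈ Set.Icc (0:ℝ) 1 ∧ f^[k] x = c}

variable {f : ℝ → ℝ} {c : ℝ}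

lemma pmem_lb {k : ℕ} {x : ℝ} (hx : x ∈ pset f c k) : preimDist f c k ≤ |x - c| :=
  csInf_le ⟨0, by rintro y ⟨z, _, rfl⟩; exact abs_nonneg _⟩ ⟨x, hx, rfl⟩

lemma pdist_nonneg {k : ℕ} (hne : (pset f c k).Nonempty) : 0 ≤ preimDist f c k :=
  le_csInf (hne.image _) (by rintro y ⟨z, _, rfl⟩; exact abs_nonneg _)

lemma iter_maps (hf : IsFibonacciMap f c) (k : ℕ) : Set.MapsTo (f^[k]) (Set.Icc 0 1) (Set.Icc 0 1) :=
  hf.1.2.1.iterate k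

lemma iter_cont (hf : IsFibonacciMap f c) (k : ℕ) : ContinuousOn (f^[k]) (Set.Icc 0 1) := by
  induction k with
  | zero => simpa using continuousOn_id
  | succ k ih =>
    rw [Function.iterate_succ']
    exact hf.1.1.comp ih (iter_maps hf k)

lemma sym_iter (hf : IsFibonacciMap f c) {x : ℝ} (hx : x ∈ Set.Icc (0:ℝ) 1) (hx' : 2*c - x ∈ Set.Icc (0:ℝ) 1)
    {k : ℕ} (hk : 1 ≤ k) : f^[k] (2*c - x) = f^[k] x := by
  obtain ⟨j, rfl⟩ : ∃ j, k = j + 1 := ⟨k - 1, by omega⟩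
  rw [Function.iterate_succ_apply, Function.iterate_succ_apply, hf.2.1 x hx hx']

lemma pdist_attained (hf : IsFibonacciMap f c) {k : ℕ} (hne : (pset f c k).Nonempty) :
    ∃ x ∈ pset f c k, |x - c| = preimDist f c k := by
  have hclosed : IsClosed (pset f c k) := by
    have h : pset f c k = Set.Icc 0 1 ∩ f^[k] ⁻¹' {c} := by
      ext x; simp [pset, Set.mem_inter_iff, Set.mem_preimage]
    rw [h]
    exact (iter_cont hf k).preimage_isClosed_of_isClosed isClosed_Icc isClosed_singleton
  have hcomp : IsCompact (pset f c k) :=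
    IsCompact.of_isClosed_subset isCompact_Icc hclosed (fun x hx => hx.1)
  obtain ⟨x, hx, hmin⟩ := hcomp.exists_isMinOn hne
    ((continuous_abs.comp (continuous_id.sub continuous_const)).continuousOn)
  have hmin' : ∀ y ∈ pset f c k, |x - c| ≤ |y - c| := fun y hy => hmin hy
  refine ⟨x, hx, le_antisymm ?_ (csInf_le ⟨0, by rintro y ⟨z, _, rfl⟩; exact abs_nonneg _⟩
    ⟨x, hx, rfl⟩)⟩
  exact le_csInf (hne.image _) (by rintro y ⟨z, hz, rfl⟩; exact hmin' z hz)

lemma rho_lt (hf : IsFibonacciMap f c) (i : ℕ) : preimDist f c (fibS (i+1)) < preimDist f c (fibS i) :=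
  (hf.2.2.2 i).1.2.2

lemma pset_ne_of_le (hf : IsFibonacciMap f c) {k m : ℕ} (hkm : k ≤ m) (h : (pset f c m).Nonempty) :
    (pset f c k).Nonempty := by
  obtain ⟨x, hxI, hx⟩ := h
  refine ⟨f^[m - k] x, iter_maps hf _ hxI, ?_⟩
  rw [← Function.iterate_add_apply]
  rwa [Nat.add_sub_cancel' hkm]

lemma pset_ne (hf : IsFibonacciMap f c) (i : ℕ) : (pset f c (fibS i)).Nonempty :=
  pset_ne_of_le hf (le_of_lt (fibS_lt i)) (hf.2.2.2 i).1.2.1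

lemma rho_pos (hf : IsFibonacciMap f c) (i : ℕ) : 0 < preimDist f c (fibS i) :=
  lt_of_le_of_lt (pdist_nonneg (pset_ne hf (i+1))) (rho_lt hf i)

lemma rho_anti (hf : IsFibonacciMap f c) {i j : ℕ} (hij : i ≤ j) : preimDist f c (fibS j) ≤ preimDist f c (fibS i) := by
  induction j with
  | zero => simpa [Nat.le_zero.mp hij] using le_rfl
  | succ j ih =>
    rcases Nat.lt_or_ge i (j+1) with h | h
    · exact le_trans (le_of_lt (rho_lt hf j)) (ih (by omega))
    · have : i = j + 1 := by omega
      simp [this]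

lemma rho_anti_strict (hf : IsFibonacciMap f c) {i j : ℕ} (hij : i < j) :
    preimDist f c (fibS j) < preimDist f c (fibS i) := by
  obtain ⟨m, rfl⟩ : ∃ m, j = m + 1 := ⟨j - 1, by omega⟩
  exact lt_of_lt_of_le (rho_lt hf m) (rho_anti hf (by omega))

lemma fibS_zero : fibS 0 = 1 := rfl
lemma fibS_one : fibS 1 = 2 := rfl

lemma cIoo (hf : IsFibonacciMap f c) : c ∈ Set.Ioo (0:ℝ) 1 := hf.1.2.2.2.2.1

lemma fc_gt (hf : IsFibonacciMap f c) : c < f c := by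
  obtain ⟨x, hxI, hx⟩ := pset_ne hf 0
  rw [fibS_zero, Function.iterate_one] at hx
  rcases lt_trichotomy x c with h | h | h
  · have := hf.1.2.2.2.2.2.1 ⟨hxI.1, le_of_lt h⟩
      ⟨le_of_lt (cIoo hf).1, le_rfl⟩ h
    rwa [hx] at this
  · exfalso
    have : preimDist f c (fibS 0) ≤ |c - c| := pmem_lb (by rw [← h] at hx ⊢; exact ⟨hxI, by simpa [fibS_zero] using hx⟩)
    simp at this
    exact absurd this (not_le.mpr (rho_pos hf 0))
  · have := hf.1.2.2.2.2.2.2 ⟨le_rfl, le_of_lt (cIoo hf).2⟩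
      ⟨le_of_lt h, hxI.2⟩ h
    rwa [hx] at this

lemma rho0_lt_c (hf : IsFibonacciMap f c) : preimDist f c (fibS 0) < c := by
  have h0 : (0:ℝ) ∈ Set.Icc (0:ℝ) c := ⟨le_rfl, le_of_lt (cIoo hf).1⟩
  have hcc : c ∈ Set.Icc (0:ℝ) c := ⟨le_of_lt (cIoo hf).1, le_rfl⟩
  have hsub : Set.Icc (0:ℝ) c ⊆ Set.Icc 0 1 := Set.Icc_subset_Icc le_rfl (le_of_lt (cIoo hf).2)
  have hcont : ContinuousOn f (Set.Icc 0 c) := hf.1.1.mono hsub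
  have hmem : c ∈ Set.Icc (f 0) (f c) := by
    rw [hf.1.2.2.1]; exact ⟨le_of_lt (cIoo hf).1, le_of_lt (fc_gt hf)⟩
  obtain ⟨y, hy, hfy⟩ := intermediate_value_Icc (le_of_lt (cIoo hf).1) hcont hmem
  have hy0 : y ≠ 0 := by
    intro h; rw [h, hf.1.2.2.1] at hfy; exact absurd hfy.symm (ne_of_gt (cIoo hf).1)
  have hlb : preimDist f c (fibS 0) ≤ |y - c| :=
    pmem_lb ⟨hsub hy, by rw [fibS_zero, Function.iterate_one]; exact hfy⟩
  have : |y - c| < c := by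
    rw [abs_of_nonpos (by linarith [hy.2])]
    have : 0 < y := lt_of_le_of_ne hy.1 (Ne.symm hy0)
    linarith
  linarith

lemma rho0_lt_c' (hf : IsFibonacciMap f c) : preimDist f c (fibS 0) < 1 - c := by
  have hsub : Set.Icc c 1 ⊆ Set.Icc (0:ℝ) 1 := Set.Icc_subset_Icc (le_of_lt (cIoo hf).1) le_rfl
  have hcont : ContinuousOn f (Set.Icc c 1) := hf.1.1.mono hsub
  have hmem : c ∈ Set.Icc (f 1) (f c) := by
    rw [hf.1.2.2.2.1]; exact ⟨le_of_lt (cIoo hf).1, le_of_lt (fc_gt hf)⟩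
  obtain ⟨y, hy, hfy⟩ := intermediate_value_Icc' (le_of_lt (cIoo hf).2) hcont hmem
  have hy1 : y ≠ 1 := by
    intro h; rw [h, hf.1.2.2.2.1] at hfy; exact absurd hfy.symm (ne_of_gt (cIoo hf).1)
  have hlb : preimDist f c (fibS 0) ≤ |y - c| :=
    pmem_lb ⟨hsub hy, by rw [fibS_zero, Function.iterate_one]; exact hfy⟩
  have : |y - c| < 1 - c := by
    rw [abs_of_nonneg (by linarith [hy.1])]
    have : y < 1 := lt_of_le_of_ne hy.2 hy1
    linarith
  linarith

lemma rho_le_rho0 (hf : IsFibonacciMap f c) (i : ℕ) :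
    preimDist f c (fibS i) ≤ preimDist f c (fibS 0) := rho_anti hf (Nat.zero_le i)

lemma radius_mem (hf : IsFibonacciMap f c) {t : ℝ} (ht0 : 0 ≤ t)
    (ht : t ≤ preimDist f c (fibS 0)) :
    c + t ∈ Set.Icc (0:ℝ) 1 ∧ c - t ∈ Set.Icc (0:ℝ) 1 := by
  have h1 := rho0_lt_c hf
  have h2 := rho0_lt_c' hf
  have := (cIoo hf).1
  have := (cIoo hf).2
  constructor <;> constructor <;> linarith

/-- both mirror points at distance `ρ i` are `S i`-preimages of `c`. -/
lemma mirror (hf : IsFibonacciMap f c) (i : ℕ) :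
    (c + preimDist f c (fibS i)) ∈ pset f c (fibS i) ∧
    (c - preimDist f c (fibS i)) ∈ pset f c (fibS i) := by
  set r := preimDist f c (fibS i) with hr
  have hr0 : 0 ≤ r := le_of_lt (rho_pos hf i)
  have hrle : r ≤ preimDist f c (fibS 0) := rho_le_rho0 hf i
  obtain ⟨x, hx, hxd⟩ := pdist_attained hf (pset_ne hf i)
  have hmem := radius_mem hf hr0 hrle
  have hx' : x = c + r ∨ x = c - r := by
    rcases abs_cases (x - c) with ⟨h1, _⟩ | ⟨h1, _⟩
    · left; rw [hxd] at h1; linarith [h1]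
    · right; rw [hxd] at h1; linarith [h1]
  have hsymi : f^[fibS i] (c + r) = f^[fibS i] (c - r) := by
    have h2 : 2*c - (c + r) = c - r := by ring
    have := sym_iter hf (x := c + r) hmem.1 (by rw [h2]; exact hmem.2) (fibS_one_le i)
    rw [h2] at this; exact this.symm
  rcases hx' with h | h
  · rw [h] at hx
    exact ⟨⟨hmem.1, hx.2⟩, ⟨hmem.2, by rw [← hsymi]; exact hx.2⟩⟩
  · rw [h] at hx
    exact ⟨⟨hmem.1, by rw [hsymi]; exact hx.2⟩, ⟨hmem.2, hx.2⟩⟩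

/-- no `j`-preimage of `c` closer than `ρ n` for `j < S (n+1)`. -/
lemma far (hf : IsFibonacciMap f c) : ∀ n, ∀ j, 1 ≤ j → j < fibS (n+1) →
    ∀ x ∈ pset f c j, preimDist f c (fibS n) ≤ |x - c| := by
  intro n
  induction n with
  | zero =>
    intro j hj1 hj2 x hx
    have : j = 1 := by rw [fibS_one] at hj2; omega
    subst this
    exact pmem_lb (by rwa [fibS_zero])
  | succ n ih =>
    intro j hj1 hj2 x hx
    rcases Nat.lt_or_ge j (fibS (n+1)) with h | h
    · exact le_trans (le_of_lt (rho_lt hf n)) (ih j hj1 h x hx)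
    · rcases Nat.eq_or_lt_of_le h with h' | h'
      · rw [h']; exact pmem_lb hx
      · have hnotin : j ∉ {k | fibS (n+1) ≤ k ∧
            ({y | y ∈ Set.Icc (0:ℝ) 1 ∧ f^[k] y = c}).Nonempty ∧
            preimDist f c k < preimDist f c (fibS (n+1))} := by
          intro hmem
          exact absurd ((hf.2.2.2 (n+1)).2 hmem) (by omega)
        have : ¬ preimDist f c j < preimDist f c (fibS (n+1)) := by
          intro hlt
          exact hnotin ⟨h, ⟨x, hx⟩, hlt⟩
        exact le_trans (not_lt.mp this) (pmem_lb hx)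

/-- `c` is not periodic. -/
lemma cnot_per (hf : IsFibonacciMap f c) : ∀ j, 1 ≤ j → f^[j] c ≠ c := by
  intro j hj h
  have hc : c ∈ pset f c j := ⟨⟨le_of_lt (cIoo hf).1, le_of_lt (cIoo hf).2⟩, h⟩
  have := far hf j j hj (by have := fibS_ge (j+1); omega) c hc
  simp at this
  exact absurd this (not_le.mpr (rho_pos hf j))

lemma cross (hf : IsFibonacciMap f c) (i : ℕ) :
    f^[fibS i] (c + preimDist f c (fibS i)) = c := (mirror hf i).1.2

lemma cross' (hf : IsFibonacciMap f c) (i : ℕ) :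
    f^[fibS i] (c - preimDist f c (fibS i)) = c := (mirror hf i).2.2

lemma mono_step (hf : IsFibonacciMap f c) {n j : ℕ} (hj1 : 1 ≤ j) (hj2 : j < fibS (n+1))
    (hm : StrictMonoOn (f^[j]) (Set.Icc c (c + preimDist f c (fibS n))) ∨
          StrictAntiOn (f^[j]) (Set.Icc c (c + preimDist f c (fibS n)))) :
    StrictMonoOn (f^[j+1]) (Set.Icc c (c + preimDist f c (fibS n))) ∨
    StrictAntiOn (f^[j+1]) (Set.Icc c (c + preimDist f c (fibS n))) := by
  set r := preimDist f c (fibS n) with hrdef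
  set J := Set.Icc c (c + r) with hJdef
  have hr0 : 0 < r := rho_pos hf n
  have hrle : r ≤ preimDist f c (fibS 0) := rho_le_rho0 hf n
  have hJI : J ⊆ Set.Icc (0:ℝ) 1 :=
    Set.Icc_subset_Icc (le_of_lt (cIoo hf).1) ((radius_mem hf (le_of_lt hr0) hrle).1.2)
  have hkey : ∀ x ∈ J, f^[j] x = c → x = c + r := by
    intro x hxJ hxc
    have h1 : preimDist f c (fibS n) ≤ |x - c| := far hf n j hj1 hj2 x ⟨hJI hxJ, hxc⟩
    have h2 : |x - c| = x - c := abs_of_nonneg (by linarith [hxJ.1])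
    have h3 : x - c ≤ r := by linarith [hxJ.2]
    rw [h2] at h1; rw [← hrdef] at h1; linarith
  have hcrJ : c + r ∈ J := ⟨by linarith, le_rfl⟩
  have hcont : ContinuousOn (f^[j]) J := (iter_cont hf j).mono hJI
  have hmemx : ∀ x ∈ J, Set.Icc x (c+r) ⊆ J := fun x hxJ => Set.Icc_subset_Icc hxJ.1 le_rfl
  have hside : (∀ x ∈ J, f^[j] x ≤ c) ∨ (∀ x ∈ J, c ≤ f^[j] x) := by
    rcases hm with hm | hm
    · rcases le_or_gt (f^[j] (c + r)) c with h | h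
      · left; intro x hxJ
        rcases eq_or_lt_of_le hxJ.2 with he | hlt2
        · rw [he]; exact h
        · exact le_trans (le_of_lt (hm hxJ hcrJ hlt2)) h
      · right; intro x hxJ
        by_contra hcx
        push_neg at hcx
        obtain ⟨y, hy, hfy⟩ := intermediate_value_Icc hxJ.2 (hcont.mono (hmemx x hxJ))
          ⟨le_of_lt hcx, le_of_lt h⟩
        have hy' := hkey y (hmemx x hxJ hy) hfy
        rw [hy'] at hfy
        exact absurd hfy (ne_of_gt h)
    · rcases le_or_gt c (f^[j] (c + r)) with h | h
      · right; intro x hxJ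
        rcases eq_or_lt_of_le hxJ.2 with he | hlt2
        · rw [he]; exact h
        · exact le_trans h (le_of_lt (hm hxJ hcrJ hlt2))
      · left; intro x hxJ
        by_contra hcx
        push_neg at hcx
        obtain ⟨y, hy, hfy⟩ := intermediate_value_Icc' hxJ.2 (hcont.mono (hmemx x hxJ))
          ⟨le_of_lt h, le_of_lt hcx⟩
        have hy' := hkey y (hmemx x hxJ hy) hfy
        rw [hy'] at hfy
        exact absurd hfy (ne_of_lt h)
  have hmaps : ∀ x ∈ J, f^[j] x ∈ Set.Icc (0:ℝ) 1 := fun x hx => iter_maps hf j (hJI hx)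
  rw [Function.iterate_succ']
  rcases hside with hs | hs
  · have hmapsJ : Set.MapsTo (f^[j]) J (Set.Icc 0 c) := fun x hx => ⟨(hmaps x hx).1, hs x hx⟩
    rcases hm with hm | hm
    · exact Or.inl (hf.1.2.2.2.2.2.1.comp hm hmapsJ)
    · exact Or.inr (hf.1.2.2.2.2.2.1.comp_strictAntiOn hm hmapsJ)
  · have hmapsJ : Set.MapsTo (f^[j]) J (Set.Icc c 1) := fun x hx => ⟨hs x hx, (hmaps x hx).2⟩
    rcases hm with hm | hm
    · exact Or.inr (hf.1.2.2.2.2.2.2.comp_strictMonoOn hm hmapsJ)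
    · exact Or.inl (hf.1.2.2.2.2.2.2.comp hm hmapsJ)

lemma mono_up (hf : IsFibonacciMap f c) {n j₀ : ℕ} (h1 : 1 ≤ j₀)
    (h0 : StrictMonoOn (f^[j₀]) (Set.Icc c (c + preimDist f c (fibS n))) ∨
          StrictAntiOn (f^[j₀]) (Set.Icc c (c + preimDist f c (fibS n)))) :
    ∀ j, j₀ ≤ j → j ≤ fibS (n+1) →
      StrictMonoOn (f^[j]) (Set.Icc c (c + preimDist f c (fibS n))) ∨
      StrictAntiOn (f^[j]) (Set.Icc c (c + preimDist f c (fibS n))) := by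
  intro j hj
  induction j, hj using Nat.le_induction with
  | base => intro _; exact h0
  | succ k hk ih =>
    intro hk2
    exact mono_step hf (le_trans h1 hk) (by omega) (ih (by omega))

lemma mono_lemma (hf : IsFibonacciMap f c) : ∀ n,
    StrictMonoOn (f^[fibS (n+1)]) (Set.Icc c (c + preimDist f c (fibS n))) ∨
    StrictAntiOn (f^[fibS (n+1)]) (Set.Icc c (c + preimDist f c (fibS n))) := by
  intro n
  induction n with
  | zero =>
    have hbase : StrictAntiOn (f^[1]) (Set.Icc c (c + preimDist f c (fibS 0))) := by
      rw [Function.iterate_one]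
      exact hf.1.2.2.2.2.2.2.mono (Set.Icc_subset_Icc le_rfl
        ((radius_mem hf (le_of_lt (rho_pos hf 0)) le_rfl).1.2))
    exact mono_up hf le_rfl (Or.inr hbase) (fibS 1) (by norm_num [fibS_one]) le_rfl
  | succ n ih =>
    have hsub : Set.Icc c (c + preimDist f c (fibS (n+1))) ⊆
        Set.Icc c (c + preimDist f c (fibS n)) :=
      Set.Icc_subset_Icc le_rfl (by linarith [rho_lt hf n])
    have hbase : StrictMonoOn (f^[fibS (n+1)]) (Set.Icc c (c + preimDist f c (fibS (n+1)))) ∨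
        StrictAntiOn (f^[fibS (n+1)]) (Set.Icc c (c + preimDist f c (fibS (n+1)))) := by
      rcases ih with h | h
      · exact Or.inl (h.mono hsub)
      · exact Or.inr (h.mono hsub)
    exact mono_up hf (fibS_one_le (n+1)) hbase (fibS (n+2)) (le_of_lt (fibS_lt (n+1))) le_rfl

section Helpers

variable {φ : ℝ → ℝ} {r r₀ s t : ℝ}

lemma inner_le (hm : StrictMonoOn φ (Set.Icc c (c+r)) ∨ StrictAntiOn φ (Set.Icc c (c+r)))
    (hr : r₀ ≤ r) (hcross : φ (c + r₀) = c)
    (hs : 0 ≤ s) (hst : s ≤ t) (ht : t ≤ r₀) :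
    |φ (c+t) - c| ≤ |φ (c+s) - c| := by
  have hms : c + s ∈ Set.Icc c (c+r) := ⟨by linarith, by linarith⟩
  have hmt : c + t ∈ Set.Icc c (c+r) := ⟨by linarith, by linarith⟩
  have hmr : c + r₀ ∈ Set.Icc c (c+r) := ⟨by linarith, by linarith⟩
  rcases hm with hm | hm
  · have h1 : φ (c+s) ≤ φ (c+t) := hm.monotoneOn hms hmt (by linarith)
    have h2 : φ (c+t) ≤ c := by
      have := hm.monotoneOn hmt hmr (by linarith : c + t ≤ c + r₀); rwa [hcross] at this
    rw [abs_of_nonpos (by linarith), abs_of_nonpos (by linarith)]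
    linarith
  · have h1 : φ (c+t) ≤ φ (c+s) := hm.antitoneOn hms hmt (by linarith)
    have h2 : c ≤ φ (c+t) := by
      have := hm.antitoneOn hmt hmr (by linarith : c + t ≤ c + r₀); rwa [hcross] at this
    rw [abs_of_nonneg (by linarith), abs_of_nonneg (by linarith)]
    linarith

lemma inner_lt (hm : StrictMonoOn φ (Set.Icc c (c+r)) ∨ StrictAntiOn φ (Set.Icc c (c+r)))
    (hr : r₀ ≤ r) (hcross : φ (c + r₀) = c)
    (hs : 0 ≤ s) (hst : s < t) (ht : t ≤ r₀) :
    |φ (c+t) - c| < |φ (c+s) - c| := by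
  have hms : c + s ∈ Set.Icc c (c+r) := ⟨by linarith, by linarith⟩
  have hmt : c + t ∈ Set.Icc c (c+r) := ⟨by linarith, by linarith⟩
  have hmr : c + r₀ ∈ Set.Icc c (c+r) := ⟨by linarith, by linarith⟩
  rcases hm with hm | hm
  · have h1 : φ (c+s) < φ (c+t) := hm hms hmt (by linarith)
    have h2 : φ (c+t) ≤ c := by
      have := hm.monotoneOn hmt hmr (by linarith : c + t ≤ c + r₀); rwa [hcross] at this
    rw [abs_of_nonpos (by linarith), abs_of_nonpos (by linarith)]
    linarith
  · have h1 : φ (c+t) < φ (c+s) := hm hms hmt (by linarith)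
    have h2 : c ≤ φ (c+t) := by
      have := hm.antitoneOn hmt hmr (by linarith : c + t ≤ c + r₀); rwa [hcross] at this
    rw [abs_of_nonneg (by linarith), abs_of_nonneg (by linarith)]
    linarith

lemma outer_le (hm : StrictMonoOn φ (Set.Icc c (c+r)) ∨ StrictAntiOn φ (Set.Icc c (c+r)))
    (hcross : φ (c + r₀) = c) (hr0 : 0 ≤ r₀)
    (hs : r₀ ≤ s) (hst : s ≤ t) (ht : t ≤ r) :
    |φ (c+s) - c| ≤ |φ (c+t) - c| := by
  have hms : c + s ∈ Set.Icc c (c+r) := ⟨by linarith, by linarith⟩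
  have hmt : c + t ∈ Set.Icc c (c+r) := ⟨by linarith, by linarith⟩
  have hmr : c + r₀ ∈ Set.Icc c (c+r) := ⟨by linarith, by linarith⟩
  rcases hm with hm | hm
  · have h1 : φ (c+s) ≤ φ (c+t) := hm.monotoneOn hms hmt (by linarith)
    have h2 : c ≤ φ (c+s) := by
      have := hm.monotoneOn hmr hms (by linarith : c + r₀ ≤ c + s); rwa [hcross] at this
    rw [abs_of_nonneg (by linarith), abs_of_nonneg (by linarith)]
    linarith
  · have h1 : φ (c+t) ≤ φ (c+s) := hm.antitoneOn hms hmt (by linarith)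
    have h2 : φ (c+s) ≤ c := by
      have := hm.antitoneOn hmr hms (by linarith : c + r₀ ≤ c + s); rwa [hcross] at this
    rw [abs_of_nonpos (by linarith), abs_of_nonpos (by linarith)]
    linarith

end Helpers

/-- C : `ρ n < |d (n+1)|`. -/
lemma Cst (hf : IsFibonacciMap f c) (n : ℕ) :
    preimDist f c (fibS n) < |f^[fibS (n+1)] c - c| := by
  have hr2 : 0 < preimDist f c (fibS (n+2)) := rho_pos hf (n+2)
  have hlt : preimDist f c (fibS (n+2)) < preimDist f c (fibS (n+1)) := rho_lt hf (n+1)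
  have hle : preimDist f c (fibS (n+1)) ≤ preimDist f c (fibS n) := le_of_lt (rho_lt hf n)
  -- w := f^[S (n+1)] (c + ρ (n+2)) is an `S n`-preimage of c
  have hwI : f^[fibS (n+1)] (c + preimDist f c (fibS (n+2))) ∈ Set.Icc (0:ℝ) 1 :=
    iter_maps hf _ (radius_mem hf (le_of_lt hr2) (rho_le_rho0 hf (n+2))).1
  have hw : f^[fibS n] (f^[fibS (n+1)] (c + preimDist f c (fibS (n+2)))) = c := by
    rw [← Function.iterate_add_apply]
    rw [show fibS n + fibS (n+1) = fibS (n+2) from by rw [fibS_add]; omega]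
    exact cross hf (n+2)
  have h3 : preimDist f c (fibS n) ≤
      |f^[fibS (n+1)] (c + preimDist f c (fibS (n+2))) - c| := pmem_lb ⟨hwI, hw⟩
  have h4 : |f^[fibS (n+1)] (c + preimDist f c (fibS (n+2))) - c| <
      |f^[fibS (n+1)] (c + 0) - c| :=
    inner_lt (mono_lemma hf n) (le_of_lt (rho_lt hf n)) (cross hf (n+1)) le_rfl hr2
      (le_of_lt hlt)
  rw [add_zero] at h4
  linarith

/-- E : `|d (n+2)| < ρ n`. -/
lemma Est (hf : IsFibonacciMap f c) (n : ℕ) :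
    |f^[fibS (n+2)] c - c| < preimDist f c (fibS n) := by
  by_contra hcon
  push_neg at hcon
  have hr2 : 0 < preimDist f c (fibS (n+2)) := rho_pos hf (n+2)
  have hrn : 0 < preimDist f c (fibS n) := rho_pos hf n
  have hlt : preimDist f c (fibS (n+2)) < preimDist f c (fibS (n+1)) := rho_lt hf (n+1)
  have hsubI : Set.Icc c (c + preimDist f c (fibS (n+2))) ⊆ Set.Icc (0:ℝ) 1 :=
    Set.Icc_subset_Icc (le_of_lt (cIoo hf).1)
      ((radius_mem hf (le_of_lt hr2) (rho_le_rho0 hf (n+2))).1.2)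
  have hcont : ContinuousOn (f^[fibS (n+2)]) (Set.Icc c (c + preimDist f c (fibS (n+2)))) :=
    (iter_cont hf _).mono hsubI
  have hKlt : fibS n + fibS (n+2) < fibS (n+3) := by
    have := fibS_lt n
    rw [show fibS (n+3) = fibS (n+2) + fibS (n+1) from fibS_add (n+1)]
    omega
  have hK1 : 1 ≤ fibS n + fibS (n+2) := by have := fibS_pos n; omega
  have main : ∀ x ∈ Set.Icc c (c + preimDist f c (fibS (n+2))),
      f^[fibS n] (f^[fibS (n+2)] x) = c → False := by
    intro x hx hxc
    have hxI : x ∈ Set.Icc (0:ℝ) 1 := hsubI hx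
    have hxK : f^[fibS n + fibS (n+2)] x = c := by
      rw [Function.iterate_add_apply]; exact hxc
    rcases eq_or_lt_of_le hx.1 with he | hlt2
    · rw [← he] at hxK
      exact cnot_per hf _ hK1 hxK
    · have h5 : preimDist f c (fibS (n+2)) ≤ |x - c| :=
        far hf (n+2) _ hK1 hKlt x ⟨hxI, hxK⟩
      have h6 : |x - c| = x - c := abs_of_nonneg (by linarith [hx.1])
      have h7 : x = c + preimDist f c (fibS (n+2)) := by
        rw [h6] at h5; have := hx.2; linarith
      rw [h7, cross hf (n+2)] at hxc
      exact cnot_per hf _ (fibS_one_le n) hxc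
  rcases mono_lemma hf (n+1) with hm | hm
  · have hdc : f^[fibS (n+2)] c < c := by
      have := hm (Set.left_mem_Icc.mpr (by linarith)) ⟨by linarith, by linarith⟩
        (by linarith : c < c + preimDist f c (fibS (n+2)))
      rwa [cross hf (n+2)] at this
    have habs : |f^[fibS (n+2)] c - c| = c - f^[fibS (n+2)] c := by
      rw [abs_of_nonpos (by linarith : f^[fibS (n+2)] c - c ≤ 0)]; ring
    have hv : c - preimDist f c (fibS n) ∈
        Set.Icc (f^[fibS (n+2)] c) (f^[fibS (n+2)] (c + preimDist f c (fibS (n+2)))) := by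
      rw [cross hf (n+2)]
      rw [habs] at hcon
      constructor
      · linarith
      · linarith
    obtain ⟨x, hxmem, hfx⟩ :=
      intermediate_value_Icc (by linarith : c ≤ c + preimDist f c (fibS (n+2))) hcont hv
    exact main x hxmem (by rw [hfx]; exact cross' hf n)
  · have hdc : c < f^[fibS (n+2)] c := by
      have := hm (Set.left_mem_Icc.mpr (by linarith)) ⟨by linarith, by linarith⟩
        (by linarith : c < c + preimDist f c (fibS (n+2)))
      rwa [cross hf (n+2)] at this
    have habs : |f^[fibS (n+2)] c - c| = f^[fibS (n+2)] c - c :=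
      abs_of_nonneg (by linarith)
    have hv : c + preimDist f c (fibS n) ∈
        Set.Icc (f^[fibS (n+2)] (c + preimDist f c (fibS (n+2)))) (f^[fibS (n+2)] c) := by
      rw [cross hf (n+2)]
      rw [habs] at hcon
      constructor
      · linarith
      · linarith
    obtain ⟨x, hxmem, hfx⟩ :=
      intermediate_value_Icc' (by linarith : c ≤ c + preimDist f c (fibS (n+2))) hcont hv
    exact main x hxmem (by rw [hfx]; exact cross hf n)

/-- orientation: `d 1 = f^[S 1] c < c`. -/
lemma d1_neg (hf : IsFibonacciMap f c) : f^[fibS 1] c < c := by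
  have hr0 : 0 < preimDist f c (fibS 0) := rho_pos hf 0
  have hr1 : 0 < preimDist f c (fibS 1) := rho_pos hf 1
  have hlt : preimDist f c (fibS 1) < preimDist f c (fibS 0) := rho_lt hf 0
  have e1 : f^[fibS 0] = f := by rw [fibS_zero, Function.iterate_one]
  have h1 : f (c + preimDist f c (fibS 0)) = c := by
    have := cross hf 0; rwa [e1] at this
  have hval : f^[fibS 1] (c + preimDist f c (fibS 0)) = f c := by
    show f^[1+1] (c + preimDist f c (fibS 0)) = f c
    rw [Function.iterate_add_apply, Function.iterate_one, h1]
  rcases mono_lemma hf 0 with hm | hm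
  · have := hm (Set.left_mem_Icc.mpr (by linarith)) ⟨by linarith, by linarith⟩
      (by linarith : c < c + preimDist f c (fibS 1))
    rwa [cross hf 1] at this
  · exfalso
    have := hm ⟨by linarith, by linarith⟩ ⟨by linarith, le_rfl⟩
      (by linarith : c + preimDist f c (fibS 1) < c + preimDist f c (fibS 0))
    rw [cross hf 1, hval] at this
    exact absurd this (not_lt.mpr (le_of_lt (fc_gt hf)))

end FibAux

/-- For a Fibonacci map, for every `n ≥ 2` the point `d_n = f^{S_n}(c)` lies in
`U^{n-1}` but not in `U^n` (where `U^n` is the open interval with endpoints `u_n`, `û_n`);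
equivalently `|u_n| < |d_n| < |u_{n-1}|`. -/
theorem fibonacci_d_between_u_levels (f : ℝ → ℝ) (c q : ℝ) (u : ℕ → ℝ)
    (hf : IsFibonacciMap f c)
    (hq : f q = q) (hqI : q ∈ Set.Ioo c 1)
    (hu1 : u 1 = 2 * c - q)
    (hu : ∀ n, 1 ≤ n →
      u (n + 1) ∈ Set.Icc (0 : ℝ) 1 ∧
      f^[fibS n] (u (n + 1)) = u n ∧
      (u (n + 1) - c) * (f^[fibS (n + 1)] c - c) > 0 ∧
      ∀ y ∈ Set.Icc (0 : ℝ) 1, f^[fibS n] y = u n → |u (n + 1) - c| ≤ |y - c|) :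
    ∀ n, 2 ≤ n →
      f^[fibS n] c ∈ Set.uIoo (u (n - 1)) (2 * c - u (n - 1)) ∧
      f^[fibS n] c ∉ Set.uIoo (u n) (2 * c - u n) ∧
      |u n - c| < |f^[fibS n] c - c| ∧
      |f^[fibS n] c - c| < |u (n - 1) - c| := by
  classical
  have hqc : c < q := hqI.1
  have hq1 : q < 1 := hqI.2
  have hc0 : 0 < c := (FibAux.cIoo hf).1
  have hc1 : c < 1 := (FibAux.cIoo hf).2
  obtain ⟨hu2I, hu2val, hu2sgn, hu2min⟩ := hu 1 le_rfl
  have hu1I : u 1 ∈ Set.Icc (0:ℝ) 1 := by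
    rw [← hu2val]; exact FibAux.iter_maps hf _ hu2I
  have hμ1 : |u 1 - c| = q - c := by
    rw [hu1, show 2*c - q - c = -(q - c) by ring, abs_neg, abs_of_nonneg (by linarith)]
  have hqI' : q ∈ Set.Icc (0:ℝ) 1 := ⟨by linarith, le_of_lt hq1⟩
  have hfu1 : f (u 1) = q := by
    rw [hu1]
    rw [hf.2.1 q hqI' (by rw [← hu1]; exact hu1I)]
    exact hq
  have uI : ∀ m, 1 ≤ m → u m ∈ Set.Icc (0:ℝ) 1 := by
    intro m hm
    rcases Nat.eq_or_lt_of_le hm with h | h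
    · rw [← h]; exact hu1I
    · obtain ⟨p, rfl⟩ : ∃ p, m = p + 2 := ⟨m - 2, by omega⟩
      exact (hu (p+1) (by omega)).1
  have uval : ∀ m, 1 ≤ m → f^[fibS m] (u (m+1)) = u m := fun m hm => (hu m hm).2.1
  have umin : ∀ m, 1 ≤ m → ∀ y ∈ Set.Icc (0:ℝ) 1, f^[fibS m] y = u m →
      |u (m+1) - c| ≤ |y - c| := fun m hm => (hu m hm).2.2.2
  have hd1 : f^[fibS 1] c < c := FibAux.d1_neg hf
  have usign1 : ∀ m, 1 ≤ m → (u m - c) * (f^[fibS m] c - c) > 0 := by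
    intro m hm
    rcases Nat.eq_or_lt_of_le hm with h | h
    · rw [← h]
      have h1 : u 1 - c < 0 := by rw [hu1]; linarith
      exact mul_pos_of_neg_of_neg h1 (by linarith)
    · obtain ⟨p, rfl⟩ : ∃ p, m = p + 2 := ⟨m - 2, by omega⟩
      exact (hu (p+1) (by omega)).2.2.1
  -- mirror helper
  have mirror_iter : ∀ (k : ℕ), 1 ≤ k → ∀ x : ℝ, x ∈ Set.Icc (0:ℝ) 1 →
      |x - c| ≤ preimDist f c (fibS 0) → f^[k] (c + |x - c|) = f^[k] x := by
    intro k hk x hxI hxb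
    rcases abs_cases (x - c) with ⟨h, _⟩ | ⟨h, _⟩
    · rw [h, show c + (x - c) = x by ring]
    · rw [h, show c + -(x - c) = 2*c - x by ring]
      have h1 := FibAux.rho0_lt_c hf
      have h2 := FibAux.rho0_lt_c' hf
      have hb := abs_le.mp hxb
      have hx2 : 2*c - x ∈ Set.Icc (0:ℝ) 1 :=
        ⟨by linarith [hb.1, hb.2], by linarith [hb.1, hb.2]⟩
      exact FibAux.sym_iter hf hxI hx2 hk
  -- base inequalities
  have B1 : q - c < preimDist f c (fibS 0) := by
    by_contra hcon
    push_neg at hcon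
    have hc' : f (c + preimDist f c (fibS 0)) = c := by
      have := FibAux.cross hf 0
      rwa [show f^[fibS 0] = f from by rw [FibAux.fibS_zero, Function.iterate_one]] at this
    have hr0 : 0 < preimDist f c (fibS 0) := FibAux.rho_pos hf 0
    have hub : c + preimDist f c (fibS 0) ≤ 1 :=
      (FibAux.radius_mem hf (le_of_lt hr0) le_rfl).1.2
    have hmem1 : c + preimDist f c (fibS 0) ∈ Set.Icc c 1 := ⟨by linarith, hub⟩
    have hmemq : q ∈ Set.Icc c 1 := ⟨le_of_lt hqc, le_of_lt hq1⟩
    rcases eq_or_lt_of_le (by linarith : c + preimDist f c (fibS 0) ≤ q) with he | hlt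
    · rw [he, hq] at hc'
      exact absurd hc'.symm (ne_of_lt hqc)
    · have := hf.1.2.2.2.2.2.2 hmem1 hmemq hlt
      rw [hc', hq] at this
      exact absurd this (not_lt.mpr (le_of_lt hqc))
  have A1 : preimDist f c (fibS 1) < q - c := by
    by_contra hcon
    push_neg at hcon
    have hr1 : 0 < preimDist f c (fibS 1) := FibAux.rho_pos hf 1
    have hr0 : 0 < preimDist f c (fibS 0) := FibAux.rho_pos hf 0
    have hlt01 : preimDist f c (fibS 1) < preimDist f c (fibS 0) := FibAux.rho_lt hf 0
    have hcr1I : c + preimDist f c (fibS 1) ∈ Set.Icc (0:ℝ) 1 :=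
      (FibAux.radius_mem hf (le_of_lt hr1) (FibAux.rho_le_rho0 hf 1)).1
    have e2 : ∀ x : ℝ, f^[fibS 1] x = f (f x) := by
      intro x
      show f^[1+1] x = f (f x)
      rw [Function.iterate_add_apply, Function.iterate_one]
    have hw1 : f (f (c + preimDist f c (fibS 1))) = c := by
      have := FibAux.cross hf 1
      rwa [e2] at this
    have hwI : f (c + preimDist f c (fibS 1)) ∈ Set.Icc (0:ℝ) 1 := hf.1.2.1 hcr1I
    have hwp : preimDist f c (fibS 0) ≤ |f (c + preimDist f c (fibS 1)) - c| :=
      FibAux.pmem_lb ⟨hwI, by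
        rw [show f^[fibS 0] = f from by rw [FibAux.fibS_zero, Function.iterate_one]]
        exact hw1⟩
    have hcr0 : f (c + preimDist f c (fibS 0)) = c := by
      have := FibAux.cross hf 0
      rwa [show f^[fibS 0] = f from by rw [FibAux.fibS_zero, Function.iterate_one]] at this
    have hub0 : c + preimDist f c (fibS 0) ≤ 1 :=
      (FibAux.radius_mem hf (le_of_lt hr0) le_rfl).1.2
    have hwge : c ≤ f (c + preimDist f c (fibS 1)) := by
      have := hf.1.2.2.2.2.2.2.antitoneOn (⟨by linarith, by linarith⟩ : c + preimDist f c (fibS 1) ∈ Set.Icc c 1)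
        (⟨by linarith, hub0⟩ : c + preimDist f c (fibS 0) ∈ Set.Icc c 1) (by linarith)
      rwa [hcr0] at this
    have hwle : f (c + preimDist f c (fibS 1)) ≤ q := by
      have := hf.1.2.2.2.2.2.2.antitoneOn (⟨le_of_lt hqc, le_of_lt hq1⟩ : q ∈ Set.Icc c 1)
        (⟨by linarith, by linarith⟩ : c + preimDist f c (fibS 1) ∈ Set.Icc c 1)
        (by linarith)
      rwa [hq] at this
    have habs : |f (c + preimDist f c (fibS 1)) - c| = f (c + preimDist f c (fibS 1)) - c :=
      abs_of_nonneg (by linarith)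
    rw [habs] at hwp
    linarith
  -- main induction: A and B
  have AB : ∀ p : ℕ, preimDist f c (fibS (p+1)) < |u (p+1) - c| ∧
      |u (p+1) - c| < preimDist f c (fibS p) := by
    intro p
    induction p with
    | zero => rw [hμ1]; exact ⟨A1, B1⟩
    | succ p ih =>
      obtain ⟨ihA, ihB⟩ := ih
      have hdp1 := FibAux.Cst hf p
      have hup1_ne : u (p+1) ≠ c := by
        intro h
        have := usign1 (p+1) (by omega)
        rw [h] at this; simp at this
      have hμpos : 0 < |u (p+1) - c| := abs_pos.mpr (sub_ne_zero.mpr hup1_ne)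
      have hμlt : |u (p+1) - c| < |f^[fibS (p+1)] c - c| := lt_trans ihB hdp1
      have hsgn := usign1 (p+1) (by omega)
      have hrp1 : 0 < preimDist f c (fibS (p+1)) := FibAux.rho_pos hf (p+1)
      have hcrmem : c + preimDist f c (fibS (p+1)) ∈ Set.Icc (0:ℝ) 1 :=
        (FibAux.radius_mem hf (le_of_lt hrp1) (FibAux.rho_le_rho0 hf (p+1))).1
      have hcontI : ContinuousOn (f^[fibS (p+1)])
          (Set.Icc c (c + preimDist f c (fibS (p+1)))) :=
        (FibAux.iter_cont hf _).mono (Set.Icc_subset_Icc (le_of_lt hc0) hcrmem.2)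
      have hcross := FibAux.cross hf (p+1)
      have hdne : f^[fibS (p+1)] c ≠ c :=
        fun h => FibAux.cnot_per hf _ (FibAux.fibS_one_le _) h
      have hy : ∃ y, y ∈ Set.Icc c (c + preimDist f c (fibS (p+1))) ∧
          f^[fibS (p+1)] y = u (p+1) := by
        rcases lt_or_gt_of_ne hdne with hdc | hdc
        · have hu_lt : u (p+1) < c := by
            rcases lt_trichotomy (u (p+1)) c with h | h | h
            · exact h
            · exact absurd h hup1_ne
            · exfalso; nlinarith
          have habs1 : |u (p+1) - c| = c - u (p+1) := by
            rw [abs_of_nonpos (by linarith)]; ring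
          have habs2 : |f^[fibS (p+1)] c - c| = c - f^[fibS (p+1)] c := by
            rw [abs_of_nonpos (by linarith)]; ring
          have hmem : u (p+1) ∈ Set.Icc (f^[fibS (p+1)] c)
              (f^[fibS (p+1)] (c + preimDist f c (fibS (p+1)))) := by
            rw [hcross]; exact ⟨by linarith, by linarith⟩
          exact intermediate_value_Icc (by linarith) hcontI hmem
        · have hu_gt : c < u (p+1) := by
            rcases lt_trichotomy (u (p+1)) c with h | h | h
            · exfalso; nlinarith
            · exact absurd h hup1_ne
            · exact h
          have habs1 : |u (p+1) - c| = u (p+1) - c := abs_of_nonneg (by linarith)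
          have habs2 : |f^[fibS (p+1)] c - c| = f^[fibS (p+1)] c - c :=
            abs_of_nonneg (by linarith)
          have hmem : u (p+1) ∈ Set.Icc
              (f^[fibS (p+1)] (c + preimDist f c (fibS (p+1)))) (f^[fibS (p+1)] c) := by
            rw [hcross]; exact ⟨by linarith, by linarith⟩
          exact intermediate_value_Icc' (by linarith) hcontI hmem
      obtain ⟨y, hyJ, hyval⟩ := hy
      have hyne : y ≠ c + preimDist f c (fibS (p+1)) := by
        intro h; rw [h, hcross] at hyval; exact hup1_ne hyval.symm
      have hyI : y ∈ Set.Icc (0:ℝ) 1 :=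
        ⟨by linarith [hyJ.1], by linarith [hyJ.2, hcrmem.2]⟩
      have hBy := umin (p+1) (by omega) y hyI hyval
      have hyabs : |y - c| < preimDist f c (fibS (p+1)) := by
        rw [abs_of_nonneg (by linarith [hyJ.1])]
        rcases eq_or_lt_of_le hyJ.2 with h | h
        · exact absurd h hyne
        · linarith
      have B2 : |u (p+2) - c| < preimDist f c (fibS (p+1)) := lt_of_le_of_lt hBy hyabs
      refine ⟨?_, B2⟩
      by_contra hcon
      push_neg at hcon
      have hm := FibAux.mono_lemma hf p
      have h1 := FibAux.inner_le hm (le_of_lt (FibAux.rho_lt hf p)) (FibAux.cross hf (p+1))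
        (abs_nonneg _) hcon (le_of_lt (FibAux.rho_lt hf (p+1)))
      have hmir := mirror_iter (fibS (p+1)) (FibAux.fibS_one_le _) (u (p+2))
        (uI (p+2) (by omega))
        (le_trans hcon (FibAux.rho_le_rho0 hf (p+2)))
      rw [hmir, uval (p+1) (by omega)] at h1
      have hwmem : c + preimDist f c (fibS (p+2)) ∈ Set.Icc (0:ℝ) 1 :=
        (FibAux.radius_mem hf (le_of_lt (FibAux.rho_pos hf (p+2)))
          (FibAux.rho_le_rho0 hf (p+2))).1
      have hwcross : f^[fibS p] (f^[fibS (p+1)] (c + preimDist f c (fibS (p+2)))) = c := by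
        rw [← Function.iterate_add_apply,
          show fibS p + fibS (p+1) = fibS (p+2) from by rw [FibAux.fibS_add]; omega]
        exact FibAux.cross hf (p+2)
      have hwp : preimDist f c (fibS p) ≤
          |f^[fibS (p+1)] (c + preimDist f c (fibS (p+2))) - c| :=
        FibAux.pmem_lb ⟨FibAux.iter_maps hf _ hwmem, hwcross⟩
      linarith
  -- D
  have Dcore : ∀ r : ℕ, preimDist f c (fibS (r+1)) < |f^[fibS (r+1)] (u (r+1)) - c| →
      |f^[fibS (r+2)] c - c| < |u (r+1) - c| := by
    intro r hV
    by_contra hcon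
    push_neg at hcon
    have hm := FibAux.mono_lemma hf r
    have hμA := (AB r).1
    have hμB := (AB r).2
    have hEr : |f^[fibS (r+2)] c - c| ≤ preimDist f c (fibS r) := le_of_lt (FibAux.Est hf r)
    have h1 := FibAux.outer_le hm (FibAux.cross hf (r+1))
      (le_of_lt (FibAux.rho_pos hf (r+1))) (le_of_lt hμA) hcon hEr
    have hmirU := mirror_iter (fibS (r+1)) (FibAux.fibS_one_le _) (u (r+1))
      (uI (r+1) (by omega)) (le_trans (le_of_lt hμB) (FibAux.rho_le_rho0 hf r))
    have hmirD := mirror_iter (fibS (r+1)) (FibAux.fibS_one_le _) (f^[fibS (r+2)] c)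
      (FibAux.iter_maps hf _ ⟨le_of_lt hc0, le_of_lt hc1⟩)
      (le_trans hEr (FibAux.rho_le_rho0 hf r))
    rw [hmirU, hmirD, ← Function.iterate_add_apply,
      show fibS (r+1) + fibS (r+2) = fibS (r+3) from FibAux.fibS_add' (r+1)]
      at h1
    have hE3 : |f^[fibS (r+3)] c - c| < preimDist f c (fibS (r+1)) := FibAux.Est hf (r+1)
    linarith
  have D : ∀ r : ℕ, |f^[fibS (r+2)] c - c| < |u (r+1) - c| := by
    intro r
    apply Dcore
    match r with
    | 0 =>
      have hval : f^[fibS 1] (u 1) = q := by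
        show f^[1+1] (u 1) = q
        rw [Function.iterate_add_apply, Function.iterate_one, hfu1, hq]
      rw [hval, abs_of_nonneg (by linarith : (0:ℝ) ≤ q - c)]
      exact A1
    | 1 =>
      have hval : f^[fibS 2] (u 2) = q := by
        rw [show fibS 2 = fibS 0 + fibS 1 from (FibAux.fibS_add' 0).symm,
          Function.iterate_add_apply, uval 1 le_rfl,
          show f^[fibS 0] = f from by rw [FibAux.fibS_zero, Function.iterate_one], hfu1]
      rw [hval, abs_of_nonneg (by linarith : (0:ℝ) ≤ q - c)]
      exact lt_trans (FibAux.rho_lt hf 1) A1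
    | (s+2) =>
      have hval : f^[fibS (s+3)] (u (s+3)) = u (s+1) := by
        rw [show fibS (s+3) = fibS (s+1) + fibS (s+2) from (FibAux.fibS_add' (s+1)).symm,
          Function.iterate_add_apply, uval (s+2) (by omega), uval (s+1) (by omega)]
      rw [hval]
      exact lt_trans (FibAux.rho_anti_strict hf (by omega : s + 1 < s + 3)) (AB s).1
  -- assemble
  intro n hn
  obtain ⟨m, rfl⟩ : ∃ m, n = m + 2 := ⟨n - 2, by omega⟩
  have hsub : m + 2 - 1 = m + 1 := by omega
  have h1 : |u (m+2) - c| < |f^[fibS (m+2)] c - c| :=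
    lt_trans (AB (m+1)).2 (FibAux.Cst hf (m+1))
  have h2 : |f^[fibS (m+2)] c - c| < |u (m+1) - c| := D m
  rw [hsub]
  refine ⟨?_, ?_, h1, h2⟩
  · have hd := abs_lt.mp h2
    rcases le_or_gt (u (m+1)) c with hle | hlt
    · have habs : |u (m+1) - c| = c - u (m+1) := by
        rw [abs_of_nonpos (by linarith)]; ring
      rw [habs] at hd
      exact Set.mem_uIoo_of_lt (by linarith [hd.1]) (by linarith [hd.2])
    · have habs : |u (m+1) - c| = u (m+1) - c := abs_of_nonneg (by linarith)
      rw [habs] at hd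
      exact Set.mem_uIoo_of_gt (by linarith [hd.1]) (by linarith [hd.2])
  · intro hmem
    have hcon : |f^[fibS (m+2)] c - c| < |u (m+2) - c| := by
      rcases le_or_gt (u (m+2)) c with hle | hlt
      · rw [Set.uIoo_of_le (by linarith : u (m+2) ≤ 2*c - u (m+2))] at hmem
        obtain ⟨ha, hb⟩ := hmem
        rw [show |u (m+2) - c| = c - u (m+2) from by
          rw [abs_of_nonpos (by linarith)]; ring, abs_lt]
        constructor <;> linarith
      · rw [Set.uIoo_of_ge (by linarith : 2*c - u (m+2) ≤ u (m+2))] at hmem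
        obtain ⟨ha, hb⟩ := hmem
        rw [abs_of_nonneg (by linarith : (0:ℝ) ≤ u (m+2) - c), abs_lt]
        constructor <;> linarith
    linarith
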